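/- Let (β,A) be a numeration system with 0 ∈ A ⊂ ℤ[β], 1 ∈ A[β], and |β| > 1. If (β,A) admits a parallel addition algorithm given by a p-local function with zero anticipation (t = 0), then β is an expanding algebraic number (all its conjugates exceed 1 in modulus). -/

import Mathlib

noncomputable section

open Pointwise

/-- `ℤ[β]`: the smallest subring of `ℂ` containing `β` (and hence `ℤ`). -/
def Zring (β : ℂ) : Subring ℂ := Subring.closure {β}

/-- `A[β]`: values of finite digit strings over `A` in nonnegative powers of `β`. -/
def Apoly (β : ℂ) (A : Set ℂ) : Set ℂ :=
  {x | ∃ (n : ℕ) (a : ℕ → ℂ), (∀ j, a j ∈ A) ∧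
    x = ∑ j ∈ Finset.range (n + 1), a j * β ^ j}

/-- A `p`-local digit set conversion in base `β` from `B` to `A`, with memory `r` and
anticipation `t` (`p = r + t + 1`), given by a local rule `Φ`. -/
def IsLocalConv (β : ℂ) (B A : Set ℂ) (r t : ℕ)
    (Φ : (Fin (r + t + 1) → ℂ) → ℂ) : Prop :=
  (∀ u : Fin (r + t + 1) → ℂ, (∀ i, u i ∈ B) → Φ u ∈ A) ∧
  ∀ w : ℤ → ℂ, (∀ j, w j ∈ B) → (Function.support w).Finite →
    (Function.support (fun j : ℤ => Φ fun i => w (j + (t : ℤ) - ((i : ℕ) : ℤ)))).Finite ∧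
    ∑ᶠ j : ℤ, w j * β ^ j =
      ∑ᶠ j : ℤ, (Φ fun i => w (j + (t : ℤ) - ((i : ℕ) : ℤ))) * β ^ j






/-- extend digits to ℤ -/
def extDig (L : ℕ) (a : ℕ → ℂ) : ℤ → ℂ :=
  fun j => if 0 ≤ j ∧ j < (L : ℤ) then a j.toNat else 0

lemma extDig_mem {A : Set ℂ} (h0 : (0:ℂ) ∈ A) {a : ℕ → ℂ} (ha : ∀ n, a n ∈ A)
    (L : ℕ) (j : ℤ) : extDig L a j ∈ A := by
  unfold extDig; split
  · exact ha _
  · exact h0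

lemma extDig_natCast (L : ℕ) (a : ℕ → ℂ) {n : ℕ} (hn : n < L) :
    extDig L a (n : ℤ) = a n := by
  unfold extDig
  rw [if_pos (by omega)]
  simp

lemma extDig_eq_zero (L : ℕ) (a : ℕ → ℂ) {j : ℤ} (hj : ¬ (0 ≤ j ∧ j < (L:ℤ))) :
    extDig L a j = 0 := if_neg hj

lemma finsum_int_of_bound (g : ℤ → ℂ) (L : ℕ)
    (h : ∀ j : ℤ, g j ≠ 0 → 0 ≤ j ∧ j < (L : ℤ)) :
    ∑ᶠ j : ℤ, g j = ∑ n ∈ Finset.range L, g (n : ℤ) := by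
  have key : ∑ᶠ j : ℤ, g j
      = ∑ j ∈ (Finset.range L).map ⟨(Nat.cast : ℕ → ℤ), fun _ _ h => Int.natCast_inj.mp h⟩, g j := by
    apply finsum_eq_sum_of_support_subset
    intro j hj
    have hj' : g j ≠ 0 := hj
    obtain ⟨h0, hL⟩ := h j hj'
    simp only [Finset.coe_map, Set.mem_image, Finset.mem_coe, Finset.mem_range,
      Function.Embedding.coeFn_mk]
    exact ⟨j.toNat, by omega, by show ((j.toNat : ℕ) : ℤ) = j; omega⟩
  rw [key, Finset.sum_map]
  rfl

lemma finsum_extDig (β : ℂ) (L : ℕ) (a : ℕ → ℂ) :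
    ∑ᶠ j : ℤ, extDig L a j * β ^ j = ∑ n ∈ Finset.range L, a n * β ^ n := by
  rw [finsum_int_of_bound _ L]
  · apply Finset.sum_congr rfl
    intro n hn
    rw [Finset.mem_range] at hn
    rw [extDig_natCast L a hn, zpow_natCast]
  · intro j hj
    by_contra hmem
    rw [extDig_eq_zero L a hmem, zero_mul] at hj
    exact hj rfl

def RepDig (β : ℂ) (A : Set ℂ) (L : ℕ) (x : ℂ) : Prop :=
  ∃ a : ℕ → ℂ, (∀ j, a j ∈ A) ∧ x = ∑ j ∈ Finset.range L, a j * β ^ j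

lemma rep_add (β : ℂ) (A : Set ℂ) (h0 : (0:ℂ) ∈ A) (r : ℕ)
    (Φ : (Fin (r + 0 + 1) → ℂ) → ℂ) (hc : IsLocalConv β (A + A) A r 0 Φ)
    (L : ℕ) (x y : ℂ) (hx : RepDig β A L x) (hy : RepDig β A L y) :
    RepDig β A (L + r) (x + y) := by
  have h00 : (0:ℂ) ∈ A + A := by simpa using Set.add_mem_add h0 h0
  -- Φ applied to the zero window is 0
  have hΦ0 : Φ (fun _ => 0) = 0 := by
    by_contra hne
    have h2 := (hc.2 (fun _ => 0) (fun _ => h00) (by simp)).1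
    have heq : (fun j : ℤ => Φ fun i : Fin (r+0+1) =>
        (fun _ : ℤ => (0:ℂ)) (j + ((0:ℕ) : ℤ) - ((i : ℕ) : ℤ))) = fun _ : ℤ => Φ (fun _ => 0) :=
      rfl
    rw [heq] at h2
    have : (Function.support fun _ : ℤ => Φ (fun _ => (0:ℂ))) = Set.univ := by
      ext j; simp [Function.mem_support, hne]
    rw [this] at h2
    exact Set.infinite_univ h2
  obtain ⟨a, ha, hxa⟩ := hx
  obtain ⟨b, hb, hyb⟩ := hy
  set w : ℤ → ℂ := fun j => extDig L a j + extDig L b j with hw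
  have hwB : ∀ j, w j ∈ A + A := fun j =>
    Set.add_mem_add (extDig_mem h0 ha L j) (extDig_mem h0 hb L j)
  have hwz : ∀ j : ℤ, ¬ (0 ≤ j ∧ j < (L:ℤ)) → w j = 0 := by
    intro j hj
    simp [hw, extDig_eq_zero L a hj, extDig_eq_zero L b hj]
  have hwfin : (Function.support w).Finite := by
    apply (Set.finite_Icc (0:ℤ) (L:ℤ)).subset
    intro j hj
    rw [Function.mem_support] at hj
    by_contra hmem
    rw [Set.mem_Icc] at hmem
    exact hj (hwz j (by omega))
  obtain ⟨hfin, hval⟩ := hc.2 w hwB hwfin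
  set c : ℕ → ℂ := fun n => Φ fun i : Fin (r+0+1) =>
    w ((n:ℤ) + ((0:ℕ) : ℤ) - ((i : ℕ) : ℤ)) with hcdef
  refine ⟨c, fun n => hc.1 _ (fun i => hwB _), ?_⟩
  have hout : ∀ j : ℤ, ¬ (0 ≤ j ∧ j < ((L + r : ℕ) : ℤ)) →
      (Φ fun i : Fin (r+0+1) => w (j + ((0:ℕ) : ℤ) - ((i : ℕ) : ℤ))) = 0 := by
    intro j hj
    have : (fun i : Fin (r+0+1) => w (j + ((0:ℕ) : ℤ) - ((i : ℕ) : ℤ))) = fun _ => 0 := by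
      funext i
      have hi : (i : ℕ) ≤ r := by omega
      apply hwz
      push_cast
      omega
    rw [this, hΦ0]
  have hlhs : ∑ᶠ j : ℤ, w j * β ^ j = x + y := by
    have : (fun j : ℤ => w j * β ^ j)
        = fun j : ℤ => extDig L a j * β ^ j + extDig L b j * β ^ j := by
      funext j; simp [hw, add_mul]
    rw [this, finsum_add_distrib, finsum_extDig, finsum_extDig, ← hxa, ← hyb]
    · apply (Set.finite_Icc (0:ℤ) (L:ℤ)).subset
      intro j hj
      rw [Function.mem_support] at hj
      by_contra hmem
      rw [Set.mem_Icc] at hmem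
      rw [extDig_eq_zero L a (by omega), zero_mul] at hj
      exact hj rfl
    · apply (Set.finite_Icc (0:ℤ) (L:ℤ)).subset
      intro j hj
      rw [Function.mem_support] at hj
      by_contra hmem
      rw [Set.mem_Icc] at hmem
      rw [extDig_eq_zero L b (by omega), zero_mul] at hj
      exact hj rfl
  have hrhs : ∑ᶠ j : ℤ, (Φ fun i : Fin (r+0+1) => w (j + ((0:ℕ) : ℤ) - ((i : ℕ) : ℤ))) * β ^ j
      = ∑ n ∈ Finset.range (L + r), c n * β ^ n := by
    rw [finsum_int_of_bound _ (L + r)]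
    · apply Finset.sum_congr rfl
      intro n hn
      rw [zpow_natCast]
    · intro j hj
      by_contra hmem
      rw [hout j hmem, zero_mul] at hj
      exact hj rfl
  rw [← hrhs, ← hval, hlhs]

lemma rep_two_pow (β : ℂ) (A : Set ℂ) (h0 : (0:ℂ) ∈ A) (r : ℕ)
    (Φ : (Fin (r + 0 + 1) → ℂ) → ℂ) (hc : IsLocalConv β (A + A) A r 0 Φ)
    (L₁ : ℕ) (h1 : RepDig β A L₁ 1) (k : ℕ) :
    RepDig β A (L₁ + k * r) ((2:ℂ) ^ k) := by
  induction k with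
  | zero => simpa using h1
  | succ k ih =>
    have := rep_add β A h0 r Φ hc (L₁ + k * r) _ _ ih ih
    have harith : L₁ + k * r + r = L₁ + (k + 1) * r := by ring
    rw [harith] at this
    have hval : (2:ℂ) ^ k + (2:ℂ) ^ k = (2:ℂ) ^ (k+1) := by ring
    rwa [hval] at this

lemma rep_bound (β γ : ℂ) (A : Set ℂ) (hAfin : A.Finite) (h0A : (0:ℂ) ∈ A)
    (hA : A ⊆ (Zring β : Set ℂ))
    (hγ : ∀ P : Polynomial ℤ, Polynomial.aeval β P = 0 → Polynomial.aeval γ P = 0)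
    (hγ1 : ‖γ‖ ≤ 1) :
    ∃ M : ℝ, ∀ (L : ℕ) (z : ℤ), RepDig β A L ((z:ℂ)) → ‖(z:ℂ)‖ ≤ L * M := by
  -- each digit is an integer polynomial in β
  have hrange : ∀ x : ℂ, x ∈ A → ∃ p : Polynomial ℤ, Polynomial.aeval β p = x := by
    intro x hx
    have hsub : Subring.closure {β} ≤ ((Polynomial.aeval β : Polynomial ℤ →ₐ[ℤ] ℂ) :
        Polynomial ℤ →+* ℂ).range := by
      apply Subring.closure_le.mpr
      intro y hy
      rw [Set.mem_singleton_iff] at hy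
      subst hy
      exact ⟨Polynomial.X, by simp⟩
    exact hsub (hA hx)
  have hPex : ∀ x : ℂ, ∃ p : Polynomial ℤ, x ∈ A → Polynomial.aeval β p = x := by
    intro x
    by_cases hx : x ∈ A
    · obtain ⟨p, hp⟩ := hrange x hx
      exact ⟨p, fun _ => hp⟩
    · exact ⟨0, fun h => absurd h hx⟩
  choose P hP using hPex
  have hne : hAfin.toFinset.Nonempty := ⟨0, hAfin.mem_toFinset.mpr h0A⟩
  set M : ℝ := hAfin.toFinset.sup' hne fun x => ‖Polynomial.aeval γ (P x)‖ with hM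
  have hMle : ∀ x ∈ A, ‖Polynomial.aeval γ (P x)‖ ≤ M := by
    intro x hx
    exact Finset.le_sup' (fun x => ‖Polynomial.aeval γ (P x)‖) (hAfin.mem_toFinset.mpr hx)
  refine ⟨M, ?_⟩
  rintro L z ⟨a, ha, hz⟩
  set Q : Polynomial ℤ := ∑ j ∈ Finset.range L, P (a j) * Polynomial.X ^ j with hQ
  have hQβ : Polynomial.aeval β Q = (z:ℂ) := by
    rw [hQ, map_sum, hz]
    apply Finset.sum_congr rfl
    intro j hj
    rw [map_mul, map_pow, Polynomial.aeval_X, hP _ (ha j)]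
  have hQγ : Polynomial.aeval γ Q = (z:ℂ) := by
    have h0 : Polynomial.aeval β (Q - Polynomial.C z) = 0 := by
      rw [map_sub, Polynomial.aeval_C, hQβ]
      simp
    have := hγ _ h0
    rw [map_sub, Polynomial.aeval_C, sub_eq_zero] at this
    rw [this]; simp
  rw [← hQγ, hQ, map_sum]
  calc ‖∑ j ∈ Finset.range L, Polynomial.aeval γ (P (a j) * Polynomial.X ^ j)‖
      ≤ ∑ j ∈ Finset.range L, ‖Polynomial.aeval γ (P (a j) * Polynomial.X ^ j)‖ :=
        norm_sum_le _ _
    _ ≤ ∑ j ∈ Finset.range L, M := by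
        apply Finset.sum_le_sum
        intro j hj
        rw [map_mul, map_pow, Polynomial.aeval_X, norm_mul, norm_pow]
        calc ‖Polynomial.aeval γ (P (a j))‖ * ‖γ‖ ^ j
            ≤ M * 1 := by
              apply mul_le_mul (hMle _ (ha j)) (pow_le_one₀ (norm_nonneg γ) hγ1)
                (pow_nonneg (norm_nonneg γ) j)
              exact le_trans (norm_nonneg _) (hMle _ (ha j))
          _ = M := mul_one M
    _ = L * M := by rw [Finset.sum_const, Finset.card_range, nsmul_eq_mul]

theorem stmt11 (β : ℂ) (hβ : 1 < ‖β‖) (A : Set ℂ) (hAfin : A.Finite)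
    (h0 : (0 : ℂ) ∈ A) (hA : A ⊆ (Zring β : Set ℂ))
    (h1 : (1 : ℂ) ∈ Apoly β A)
    (hpar : ∃ (r : ℕ) (Φ : (Fin (r + 0 + 1) → ℂ) → ℂ), IsLocalConv β (A + A) A r 0 Φ) :
    IsAlgebraic ℚ β ∧
      ∀ γ : ℂ, Polynomial.aeval γ (minpoly ℚ β) = 0 → 1 < ‖γ‖ := by
  obtain ⟨r, Φ, hc⟩ := hpar
  obtain ⟨n, a, ha, hone⟩ := h1
  have hrep1 : RepDig β A (n + 1) 1 := ⟨a, ha, hone⟩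
  by_contra hcon
  -- a "small" conjugate (or 0 if β is transcendental)
  have hγex : ∃ γ : ℂ, ‖γ‖ ≤ 1 ∧
      ∀ P : Polynomial ℤ, Polynomial.aeval β P = 0 → Polynomial.aeval γ P = 0 := by
    by_cases halg : IsAlgebraic ℚ β
    · push_neg at hcon
      obtain ⟨γ, hroot, hle⟩ := hcon halg
      refine ⟨γ, hle, ?_⟩
      intro P hP
      have hmap : Polynomial.aeval β (P.map (algebraMap ℤ ℚ)) = 0 := by
        rwa [Polynomial.aeval_map_algebraMap]
      obtain ⟨q, hq⟩ := minpoly.dvd ℚ β hmap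
      have hz : Polynomial.aeval γ (P.map (algebraMap ℤ ℚ)) = 0 := by
        rw [hq, map_mul, hroot, zero_mul]
      rwa [Polynomial.aeval_map_algebraMap] at hz
    · refine ⟨0, by simp, ?_⟩
      intro P hP
      have hP0 : P = 0 := by
        by_contra hne
        apply halg
        refine ⟨P.map (algebraMap ℤ ℚ), ?_, ?_⟩
        · intro h
          apply hne
          apply Polynomial.map_injective _ (RingHom.injective_int (algebraMap ℤ ℚ))
          simpa using h
        · rwa [Polynomial.aeval_map_algebraMap]
      simp [hP0]
  obtain ⟨γ, hγ1, hγ⟩ := hγex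
  obtain ⟨M, hM⟩ := rep_bound β γ A hAfin h0 hA hγ hγ1
  -- the bound on powers of two
  have hbd : ∀ k : ℕ, (2:ℝ) ^ k ≤ ((n + 1 + k * r : ℕ) : ℝ) * M := by
    intro k
    have hr := rep_two_pow β A h0 r Φ hc (n + 1) hrep1 k
    have hr' : RepDig β A (n + 1 + k * r) (((2 ^ k : ℤ) : ℂ)) := by
      have : ((2 ^ k : ℤ) : ℂ) = (2:ℂ) ^ k := by push_cast; ring
      rwa [this]
    have := hM (n + 1 + k * r) (2 ^ k) hr'
    calc (2:ℝ) ^ k = ‖((2 ^ k : ℤ) : ℂ)‖ := by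
          rw [show ((2 ^ k : ℤ) : ℂ) = (2:ℂ) ^ k by push_cast; ring, norm_pow, Complex.norm_two]
      _ ≤ _ := this
  -- derive a contradiction: exponential beats linear
  set L₁ : ℕ := n + 1 with hL₁
  have hM0 : 0 < M := by
    have := hbd 0
    simp at this
    nlinarith [this, (Nat.cast_pos (α := ℝ)).mpr (Nat.succ_pos n)]
  set C : ℝ := ((L₁ : ℝ) + 2 * r) * M with hC
  set m : ℕ := ⌈C⌉₊ with hm
  have hCm : C < (m : ℝ) + 1 := lt_of_le_of_lt (Nat.le_ceil C) (by rw [← hm]; exact lt_add_one _)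
  have h2m : ((m : ℝ) + 1) ≤ (2:ℝ) ^ m := by
    exact_mod_cast (Nat.lt_two_pow_self (n := m))
  have hsq : ((m : ℝ) + 1) ^ 2 ≤ (2:ℝ) ^ (2 * m) := by
    rw [two_mul, pow_add]
    calc ((m : ℝ) + 1) ^ 2 = ((m:ℝ)+1) * ((m:ℝ)+1) := sq ((m:ℝ)+1)
      _ ≤ (2:ℝ)^m * (2:ℝ)^m := by
          apply mul_le_mul h2m h2m (by positivity) (by positivity)
  have hup : ((L₁ + 2 * m * r : ℕ) : ℝ) * M ≤ ((m : ℝ) + 1) * C := by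
    rw [hC]
    push_cast
    nlinarith [mul_nonneg hM0.le (mul_nonneg (Nat.cast_nonneg (α := ℝ) m) (Nat.cast_nonneg (α := ℝ) n)),
      mul_nonneg hM0.le (Nat.cast_nonneg (α := ℝ) m),
      mul_nonneg hM0.le (Nat.cast_nonneg (α := ℝ) r)]
  have hfin := hbd (2 * m)
  have harith : (n + 1 + 2 * m * r : ℕ) = (L₁ + 2 * m * r : ℕ) := by rw [hL₁]
  rw [harith] at hfin
  nlinarith [hsq, hfin, hup, hCm, sq_nonneg ((m:ℝ)+1), Nat.cast_nonneg (α := ℝ) m]
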